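/- arXiv:2011.05491 — 6 statements merged into one kernel-verified Lean document; each statement's English description precedes it below -/
import Mathlib

section
/- Let q be a power of a prime p. For all integers a, b with 0 ≤ b ≤ a < q, one has (-1)^a * C(a, b) ≡ (-1)^b * C(q-1-b, q-1-a) (mod p). -/
private lemma lemA (p : ℕ) (hp : p.Prime) (e : ℕ) :
    ∀ b : ℕ, b < p ^ e → (((p ^ e - 1).choose b : ZMod p)) = (-1) ^ b := by
  intro b
  induction b with
  | zero => simp
  | succ n ih =>
    intro hb
    have hn : n < p ^ e := lt_of_le_of_lt (Nat.le_succ n) hb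
    have hpos : 0 < p ^ e := Nat.pow_pos hp.pos
    have hpas : (p ^ e).choose (n + 1)
        = (p ^ e - 1).choose n + (p ^ e - 1).choose (n + 1) := by
      conv_lhs => rw [show p ^ e = (p ^ e - 1) + 1 by omega]
      exact Nat.choose_succ_succ _ _
    have hdvd : p ∣ (p ^ e).choose (n + 1) :=
      hp.dvd_choose_pow (Nat.succ_ne_zero n) (Nat.ne_of_lt hb)
    have hz : (((p ^ e).choose (n + 1) : ℕ) : ZMod p) = 0 := by
      exact_mod_cast (ZMod.natCast_eq_zero_iff _ _).mpr hdvd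
    have := congrArg (fun x : ℕ => (x : ZMod p)) hpas
    push_cast at this
    rw [hz, ih hn] at this
    have : ((p ^ e - 1).choose (n + 1) : ZMod p) = -(-1) ^ n := by
      linear_combination -this
    rw [this, pow_succ]
    ring

private lemma negOnePowQ (p : ℕ) (hp : p.Prime) (e : ℕ) :
    ((-1 : ZMod p)) ^ (p ^ e - 1) = 1 := by
  rcases hp.eq_two_or_odd' with h2 | hodd
  · subst h2
    have : (-1 : ZMod 2) = 1 := by decide
    rw [this, one_pow]
  · have hq : Odd (p ^ e) := hodd.pow
    have heven : Even (p ^ e - 1) := by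
      rcases hq with ⟨k, hk⟩
      have : p ^ e - 1 = 2 * k := by omega
      exact ⟨k, by omega⟩
    exact heven.neg_one_pow

private lemma key (p : ℕ) (hp : p.Prime) (e : ℕ) :
    ∀ d a b : ℕ, p ^ e - 1 - a = d → b ≤ a → a < p ^ e →
    ((-1 : ZMod p) ^ a * (a.choose b : ZMod p)) =
      ((-1 : ZMod p) ^ b * ((p ^ e - 1 - b).choose (p ^ e - 1 - a) : ZMod p)) := by
  intro d
  induction d with
  | zero =>
    intro a b hd hba haq
    have hpos : 0 < p ^ e := Nat.pow_pos hp.pos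
    have ha : a = p ^ e - 1 := by omega
    subst ha
    rw [show p ^ e - 1 - (p ^ e - 1) = 0 by omega, Nat.choose_zero_right]
    rw [lemA p hp e b (by omega), negOnePowQ p hp e]
    push_cast
    ring
  | succ d ih =>
    intro a b hd hba haq
    have hpos : 0 < p ^ e := Nat.pow_pos hp.pos
    suffices h : ∀ c b : ℕ, b ≤ a → a - b = c →
        ((-1 : ZMod p) ^ a * (a.choose b : ZMod p)) =
          ((-1 : ZMod p) ^ b * ((p ^ e - 1 - b).choose (p ^ e - 1 - a) : ZMod p)) by
      exact h (a - b) b hba rfl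
    intro c
    induction c with
    | zero =>
      intro b hba' hc
      have : b = a := by omega
      subst this
      rw [Nat.choose_self, Nat.choose_self]
    | succ c ihc =>
      intro b hba' hc
      have hb1 : b + 1 ≤ a := by omega
      have h1 := ih (a + 1) (b + 1) (by omega) (by omega) (by omega)
      have h2 := ihc (b + 1) hb1 (by omega)
      have e1 : p ^ e - 1 - (b + 1) = d + 1 + c := by omega
      have e2 : p ^ e - 1 - (a + 1) = d := by omega
      have e3 : p ^ e - 1 - a = d + 1 := by omega
      have e4 : p ^ e - 1 - b = d + 1 + (c + 1) := by omega
      rw [e1, e2] at h1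
      rw [e1, e3] at h2
      rw [e3, e4]
      have p1 : ((a + 1).choose (b + 1) : ZMod p)
          = a.choose b + a.choose (b + 1) := by
        rw [Nat.choose_succ_succ]; push_cast; ring
      have p2 : ((d + 1 + (c + 1)).choose (d + 1) : ZMod p)
          = (d + 1 + c).choose d + (d + 1 + c).choose (d + 1) := by
        rw [show d + 1 + (c + 1) = (d + 1 + c) + 1 by ring, Nat.choose_succ_succ]
        push_cast; ring
      rw [p2]
      rw [pow_succ, pow_succ] at h1
      rw [pow_succ] at h2
      rw [p1] at h1
      linear_combination -h1 - h2

theorem stmt_0 (p : ℕ) (hp : p.Prime) (q : ℕ) (e : ℕ) (hq : q = p ^ e)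
    (a b : ℕ) (hba : b ≤ a) (haq : a < q) :
    ((-1 : ZMod p) ^ a * (a.choose b : ZMod p)) =
      ((-1 : ZMod p) ^ b * ((q - 1 - b).choose (q - 1 - a) : ZMod p)) := by
  subst hq
  exact key p hp e (p ^ e - 1 - a) a b rfl hba haq
end

section
/- Let p be a prime and n a positive integer. If C(n, j) ≡ 0 (mod p) for all j with 0 < j < n, then n is a power of p. -/
lemma aux3 (p : ℕ) (hp : p.Prime) : ∀ e n : ℕ, p ^ e ≤ n → n < p ^ (e + 1) →
    ¬ p ∣ n.choose (p ^ e) := by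
  intro e
  induction e with
  | zero =>
    intro n h1 h2
    have h1' : 1 ≤ n := by simpa using h1
    have h2' : n < p := by simpa using h2
    simpa [Nat.choose_one_right] using Nat.not_dvd_of_pos_of_lt h1' h2'
  | succ e ih =>
    intro n h1 h2 hdvd
    haveI : Fact p.Prime := ⟨hp⟩
    have hmod := Choose.choose_modEq_choose_mod_mul_choose_div_nat (p := p) (n := n) (k := p ^ (e + 1))
    have hpk : p ^ (e + 1) % p = 0 := by
      simp [Nat.pow_succ, Nat.mul_mod_left]
    have hdiv : p ^ (e + 1) / p = p ^ e := by
      rw [Nat.pow_succ, Nat.mul_div_cancel _ hp.pos]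
    rw [hpk, hdiv, Nat.choose_zero_right, one_mul] at hmod
    have hp0 : 0 < p := hp.pos
    have hle : p ^ e ≤ n / p := by
      rw [Nat.le_div_iff_mul_le hp0]; rw [← pow_succ] ; exact h1
    have hlt : n / p < p ^ (e + 1) := by
      rw [Nat.div_lt_iff_lt_mul hp0, ← pow_succ]; exact h2
    apply ih (n / p) hle hlt
    have : n.choose (p ^ (e + 1)) % p = (n / p).choose (p ^ e) % p := hmod
    rwa [Nat.dvd_iff_mod_eq_zero, ← this, ← Nat.dvd_iff_mod_eq_zero]

theorem stmt_3 (p : ℕ) (hp : p.Prime) (n : ℕ) (hn : 0 < n)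
    (h : ∀ j : ℕ, 0 < j → j < n → p ∣ n.choose j) :
    ∃ e : ℕ, n = p ^ e := by
  set e := Nat.log p n with he
  have h1 : p ^ e ≤ n := Nat.pow_log_le_self p hn.ne'
  have h2 : n < p ^ (e + 1) := Nat.lt_pow_succ_log_self hp.one_lt n
  refine ⟨e, ?_⟩
  by_contra hne
  exact aux3 p hp e n h1 h2 (h _ (pow_pos hp.pos e) (by omega))
end

section
/- Let q be a power of a prime p, and let n > 2 and a be integers such that C(n, j-1) + a * C(n, j) ≡ 0 (mod p) for all j with 1 < j < n. Then either n is a power of p, or a ≡ 1 (mod p) and n+1 is a power of p, or a ≡ -1 (mod p) and n = 3. -/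
lemma dec2' : ∀ x y : ZMod 2, x ≠ 0 → y ≠ 0 → x = -1 ∧ y = -1 := by decide

lemma dec3' : ∀ x y : ZMod 3, 2 * x = y - 1 → x ≠ 0 → y ≠ 0 → x = -1 ∧ y = -1 := by decide

lemma lemA_s4 (p : ℕ) (hp : p.Prime) : ∀ m : ℕ, 2 ≤ m →
    (∀ j : ℕ, 0 < j → j < m → ((m.choose j : ZMod p) = 0)) → ∃ t, m = p ^ t := by
  haveI : Fact p.Prime := ⟨hp⟩
  intro m
  induction m using Nat.strong_induction_on with
  | _ m ih =>
    intro hm hvan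
    have hm0 : ((m : ZMod p)) = 0 := by
      have := hvan 1 one_pos (by omega)
      simpa using this
    have hpm : p ∣ m := (ZMod.natCast_eq_zero_iff _ _).mp hm0
    obtain ⟨c, rfl⟩ := hpm
    have hp2 : 2 ≤ p := hp.two_le
    have hc1 : 1 ≤ c := by nlinarith
    rcases eq_or_lt_of_le hc1 with h1 | hc2
    · exact ⟨1, by rw [pow_one, ← h1, mul_one]⟩
    · have hvan' : ∀ j : ℕ, 0 < j → j < c → ((c.choose j : ZMod p) = 0) := by
        intro j hj hjc
        have lucas := Choose.choose_modEq_choose_mod_mul_choose_div_nat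
          (p := p) (n := p * c) (k := p * j)
        rw [Nat.mul_mod_right, Nat.mul_mod_right, Nat.mul_div_cancel_left _ hp.pos,
          Nat.mul_div_cancel_left _ hp.pos, Nat.choose_self, one_mul] at lucas
        have hcast : ((p * c).choose (p * j) : ZMod p) = (c.choose j : ZMod p) :=
          (ZMod.natCast_eq_natCast_iff _ _ _).mpr lucas
        rw [← hcast]
        exact hvan (p * j) (by positivity) (Nat.mul_lt_mul_left hp.pos |>.mpr hjc)
      obtain ⟨t, rfl⟩ := ih c (by nlinarith) hc2 hvan'
      exact ⟨t + 1, by rw [pow_succ, mul_comm]⟩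

theorem stmt_4 (p : ℕ) (hp : p.Prime) (q : ℕ) (e : ℕ) (hq : q = p ^ e)
    (n : ℕ) (hn : 2 < n) (a : ℤ)
    (h : ∀ j : ℕ, 1 < j → j < n →
      ((n.choose (j - 1) : ZMod p) + (a : ZMod p) * (n.choose j : ZMod p)) = 0) :
    (∃ t : ℕ, n = p ^ t) ∨
      ((a : ZMod p) = 1 ∧ ∃ t : ℕ, n + 1 = p ^ t) ∨
      ((a : ZMod p) = -1 ∧ n = 3) := by
  haveI : Fact p.Prime := ⟨hp⟩
  haveI : NeZero p := ⟨hp.pos.ne'⟩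
  have hsymm : n.choose (n - 1) = n := by
    rw [Nat.choose_symm (by omega : 1 ≤ n), Nat.choose_one_right]
  by_cases ha : (a : ZMod p) = 0
  · -- all middle binomials vanish
    left
    apply lemA_s4 p hp n (by omega)
    intro j hj hjn
    have hN : ((n : ZMod p)) = 0 := by
      have := h 2 (by norm_num) (by omega)
      simpa [ha, Nat.choose_one_right] using this
    rcases eq_or_lt_of_le (by omega : j ≤ n - 1) with he | hlt
    · rw [he, hsymm]; exact hN
    · have := h (j + 1) (by omega) (by omega)
      simpa [ha] using this
  · -- a ≠ 0
    set b : ZMod p := -(a : ZMod p)⁻¹ with hb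
    have ha' : (a : ZMod p) * (a : ZMod p)⁻¹ = 1 := mul_inv_cancel₀ ha
    have hb0 : b ≠ 0 := by
      simp [hb, inv_eq_zero, ha]
    have key : ∀ j : ℕ, 1 ≤ j → j ≤ n - 1 →
        ((n.choose j : ZMod p)) = (n : ZMod p) * b ^ (j - 1) := by
      intro j
      induction j with
      | zero => omega
      | succ j ihj =>
        intro _ hjn
        rcases Nat.eq_zero_or_pos j with rfl | hj1
        · simp [Nat.choose_one_right]
        · obtain ⟨i, rfl⟩ : ∃ i, j = i + 1 := ⟨j - 1, by omega⟩
          have hrec := h (i + 2) (by omega) (by omega)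
          have hIH := ihj (by omega) (by omega)
          simp only [Nat.add_sub_cancel] at hrec hIH ⊢
          have hstep : ((n.choose (i + 2) : ZMod p)) = b * (n.choose (i + 1) : ZMod p) := by
            rw [hb]
            have hrec' : ((n.choose (i + 1) : ZMod p)) + (a : ZMod p) * (n.choose (i + 2)) = 0 := by
              have : (i + 2) - 1 = i + 1 := by omega
              rw [this] at hrec; exact hrec
            linear_combination (a : ZMod p)⁻¹ * hrec' - ((n.choose (i + 2) : ZMod p)) * ha'
          rw [hstep, hIH, pow_succ]
          ring
    by_cases hn0 : ((n : ZMod p)) = 0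
    · left
      apply lemA_s4 p hp n (by omega)
      intro j hj hjn
      rw [key j (by omega) (by omega), hn0, zero_mul]
    · by_cases hn3 : n = 3
      · right; right
        refine ⟨?_, hn3⟩
        subst hn3
        have h2 := h 2 (by norm_num) (by norm_num)
        norm_num [Nat.choose] at h2
        have h3 : ((3 : ℕ) : ZMod p) ≠ 0 := by exact_mod_cast hn0
        have hprod : ((3 : ℕ) : ZMod p) * (1 + (a : ZMod p)) = 0 := by
          push_cast at h2 ⊢; linear_combination h2
        rcases mul_eq_zero.mp hprod with hc | hc
        · exact absurd hc h3
        · linear_combination hc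
      · -- n ≥ 4
        have hn4 : 4 ≤ n := by omega
        set N : ZMod p := (n : ZMod p) with hN
        have dd2 : n.descFactorial 2 = (n - 1) * n := by
          simp [Nat.descFactorial]
        have dd3 : n.descFactorial 3 = (n - 2) * ((n - 1) * n) := by
          simp [Nat.descFactorial]
        have d2 : 2 * n.choose 2 = (n - 1) * n := by
          rw [← dd2, Nat.descFactorial_eq_factorial_mul_choose]
          norm_num [Nat.factorial]
        have d3 : 6 * n.choose 3 = (n - 2) * ((n - 1) * n) := by
          rw [← dd3, Nat.descFactorial_eq_factorial_mul_choose]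
          norm_num [Nat.factorial]
        have c1 : ((n - 1 : ℕ) : ZMod p) = N - 1 := by
          rw [Nat.cast_sub (by omega)]; rw [← hN]; norm_num
        have c2 : ((n - 2 : ℕ) : ZMod p) = N - 2 := by
          rw [Nat.cast_sub (by omega)]; rw [← hN]; norm_num
        have t2 := congrArg (Nat.cast : ℕ → ZMod p) d2
        push_cast at t2
        rw [key 2 (by omega) (by omega)] at t2
        rw [← hN] at t2
        rw [c1] at t2
        norm_num at t2
        -- t2 : 2 * (N * b) = (N - 1) * N
        have t3 := congrArg (Nat.cast : ℕ → ZMod p) d3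
        push_cast at t3
        rw [key 3 (by omega) (by omega)] at t3
        rw [← hN] at t3
        rw [c1, c2] at t3
        norm_num at t3
        -- t3 : 6 * (N * b ^ 2) = (N - 2) * ((N - 1) * N)
        have e2' : (2 : ZMod p) * b = N - 1 :=
          mul_right_cancel₀ hn0 (by linear_combination t2)
        have e3' : (6 : ZMod p) * b ^ 2 = (N - 2) * (N - 1) :=
          mul_right_cancel₀ hn0 (by linear_combination t3)
        -- conclude b = -1 and N = -1
        have hbN : b = -1 ∧ N = -1 := by
          by_cases hp2 : p = 2
          · subst hp2
            exact dec2' b N hb0 hn0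
          · by_cases hp3 : p = 3
            · subst hp3
              exact dec3' b N e2' hb0 hn0
            · -- p ≥ 5
              have h2 : (2 : ZMod p) ≠ 0 := by
                intro hc
                have hdvd : p ∣ 2 := by
                  rw [← ZMod.natCast_eq_zero_iff]
                  exact_mod_cast hc
                have h1 := Nat.le_of_dvd (by norm_num) hdvd
                have h2 := hp.two_le
                omega
              have hN1 : N - 1 ≠ 0 := by
                intro hc
                apply hb0
                have h20 : (2 : ZMod p) * b = 0 := by rw [e2', hc]
                rcases mul_eq_zero.mp h20 with hc' | hc'
                · exact absurd hc' h2
                · exact hc'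
              have key2 : (3 : ZMod p) * (N - 1) = 2 * (N - 2) := by
                apply mul_right_cancel₀ hN1
                have lhs : (3 : ZMod p) * (N - 1) * (N - 1) = 3 * ((2 * b) * (2 * b)) := by
                  rw [e2']; ring
                have rhs : (2 : ZMod p) * (N - 2) * (N - 1) = 2 * (6 * b ^ 2) := by
                  rw [e3']; ring
                rw [lhs, rhs]; ring
              have hNm1 : N = -1 := by linear_combination key2
              refine ⟨?_, hNm1⟩
              apply mul_left_cancel₀ h2
              rw [e2', hNm1]; ring
        obtain ⟨hbm1, hNm1⟩ := hbN
        right; left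
        constructor
        · have hinv : (a : ZMod p)⁻¹ = 1 := by
            rw [hb] at hbm1
            linear_combination -hbm1
          exact inv_eq_one.mp hinv
        · have hparity : ((-1 : ZMod p)) ^ (n - 1) = -1 := by
            have hk := key (n - 1) (by omega) (le_refl _)
            rw [hsymm, ← hN, hbm1, hNm1] at hk
            rw [show n - 1 = (n - 1 - 1) + 1 by omega, pow_succ]
            linear_combination -hk
          have all : ∀ j : ℕ, j ≤ n → ((n.choose j : ZMod p)) = (-1) ^ j := by
            intro j hj
            rcases Nat.eq_zero_or_pos j with rfl | hj0
            · simp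
            · rcases eq_or_lt_of_le hj with heq | hjlt
              · rw [heq, Nat.choose_self]
                rw [show n = (n - 1) + 1 by omega, pow_succ, hparity]
                norm_num
              · obtain ⟨i, rfl⟩ : ∃ i, j = i + 1 := ⟨j - 1, by omega⟩
                rw [key (i + 1) (by omega) (by omega), Nat.add_sub_cancel,
                  hbm1, hNm1, pow_succ]
                ring
          apply lemA_s4 p hp (n + 1) (by omega)
          intro j hj hjn
          obtain ⟨i, rfl⟩ : ∃ i, j = i + 1 := ⟨j - 1, by omega⟩
          rw [Nat.choose_succ_succ]
          push_cast
          rw [all i (by omega), all (i + 1) (by omega), pow_succ]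
          ring
end

section
/- Let p be a prime and n > 2 an integer not divisible by p, and suppose a is an integer with C(n, j-1) + a*C(n, j) ≡ 0 (mod p) for all 1 < j < n. Then in F_p[x] one has the polynomial identity (x + a)(x + 1)^n = x^{n+1} + (a+n)x^n + (an+1)x + a. -/
open Polynomial

theorem stmt_5 (p : ℕ) (hp : p.Prime) [Fact p.Prime]
    (n : ℕ) (hn : 2 < n) (hpn : ¬ p ∣ n) (a : ℤ)
    (h : ∀ j : ℕ, 1 < j → j < n →
      ((n.choose (j - 1) : ZMod p) + (a : ZMod p) * (n.choose j : ZMod p)) = 0) :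
    (X + C (a : ZMod p)) * (X + 1) ^ n =
      X ^ (n + 1) + C ((a : ZMod p) + (n : ZMod p)) * X ^ n
        + C ((a : ZMod p) * (n : ZMod p) + 1) * X + C (a : ZMod p) := by
  ext k
  rw [add_mul]
  simp only [coeff_add, coeff_C_mul, coeff_X_pow, coeff_X, coeff_C,
    coeff_X_add_one_pow]
  rcases Nat.eq_zero_or_pos k with rfl | hk
  · simp [mul_coeff_zero, coeff_X_add_one_pow]
    omega
  obtain ⟨k, rfl⟩ := Nat.exists_eq_add_of_le hk
  rw [add_comm 1 k, coeff_X_mul, coeff_X_add_one_pow]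
  rcases lt_trichotomy (k + 1) n with hlt | heq | hgt
  · rcases Nat.eq_zero_or_pos k with rfl | hk1
    · -- k+1 = 1
      simp only [Nat.choose_zero_right, Nat.choose_one_right]
      have h1 : ¬ (1 = n + 1) := by omega
      have h2 : ¬ (1 = n) := by omega
      simp [h1, h2, add_comm]
      omega
    · -- 1 < k+1 < n
      have := h (k + 1) (by omega) hlt
      simp only [Nat.add_sub_cancel] at this
      have h1 : ¬ (k + 1 = n + 1) := by omega
      have h2 : ¬ (k + 1 = n) := by omega
      have h3 : k ≠ 0 := by omega
      simp [h1, h2, this, h3]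
      omega
  · -- k + 1 = n
    have h1 : ¬ (k + 1 = n + 1) := by omega
    have h3 : k ≠ 0 := by omega
    have hc : n.choose k = n := by
      have h4 : n.choose (n - 1) = n := by
        rw [Nat.choose_symm (by omega), Nat.choose_one_right]
      rw [show k = n - 1 by omega, h4]
    rw [heq, hc]
    have h4 : (1:ℕ) ≠ n := by omega
    have h5 : n ≠ 0 := by omega
    simp [h1, h3, h4, h5, Nat.choose_self]
    ring
  · -- k + 1 > n
    rw [Nat.choose_eq_zero_of_lt hgt]
    rcases eq_or_ne (k + 1) (n + 1) with heq | hne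
    · have : k = n := by omega
      subst this
      simp [Nat.choose_self]
      omega
    · rw [Nat.choose_eq_zero_of_lt (by omega)]
      have h2 : ¬ (k + 1 = n) := by omega
      have h3 : k ≠ 0 := by omega
      simp [hne, h2, h3]
      omega
end

section
/- Let p be a prime, and suppose integers a, n with n > 2 satisfy (x + a)(x + 1)^n = x^{n+1} + (a+n)x^n + (an+1)x + a in F_p[x], with n not divisible by p. Then (a - (-1)^n)(n - 1 - (-1)^n) ≡ 0 (mod p) and a(n-1) + 2 ≡ 0 (mod p). -/
open Polynomial

theorem stmt_6 (p : ℕ) (hp : p.Prime) (n : ℕ) (hn : 2 < n) (hpn : ¬ p ∣ n) (a : ℤ)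
    (h : (X + C (a : ZMod p)) * (X + 1) ^ n =
      X ^ (n + 1) + C ((a : ZMod p) + (n : ZMod p)) * X ^ n
        + C ((a : ZMod p) * (n : ZMod p) + 1) * X + C (a : ZMod p)) :
    ((a : ZMod p) - (-1 : ZMod p) ^ n) * ((n : ZMod p) - 1 - (-1 : ZMod p) ^ n) = 0 ∧
      (a : ZMod p) * ((n : ZMod p) - 1) + 2 = 0 := by
  haveI : Fact p.Prime := ⟨hp⟩
  have hn0 : n ≠ 0 := by omega
  -- evaluate the identity at -1
  have h1 := congrArg (eval (-1)) h
  simp [zero_pow hn0] at h1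
  have he : ((-1 : ZMod p) ^ n) * ((a : ZMod p) + (n : ZMod p) - 1)
      = (a : ZMod p) * ((n : ZMod p) - 1) + 1 := by
    have hp1 : ((-1:ZMod p) ^ (n+1)) = -((-1:ZMod p)^n) := by ring
    rw [hp1] at h1
    linear_combination -h1
  -- extract the coefficient of X^2
  have h2 := congrArg (fun q => q.coeff 2) h
  simp only [mul_comm (X + C (a : ZMod p)), mul_add, mul_one,
    coeff_add, coeff_mul_X, coeff_mul_C, coeff_X_add_one_pow, coeff_X_pow, coeff_C_mul,
    coeff_C, coeff_X] at h2
  norm_num at h2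
  rw [if_neg (by omega : ¬ (2 = n + 1)), if_neg (by omega : ¬ (2 = n))] at h2
  -- h2 : ↑n + ↑(n.choose 2) * ↑a = 0
  have hch : (2 * n.choose 2 : ℕ) = n * (n - 1) := by
    rw [Nat.choose_two_right, Nat.mul_div_cancel' (Nat.even_mul_pred_self n).two_dvd]
  have hch' : (2 : ZMod p) * (n.choose 2 : ZMod p) = (n : ZMod p) * ((n : ZMod p) - 1) := by
    have := congrArg (Nat.cast : ℕ → ZMod p) hch
    push_cast [Nat.cast_sub (by omega : 1 ≤ n)] at this
    exact this
  have hN : (n : ZMod p) ≠ 0 := by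
    rwa [Ne, ZMod.natCast_eq_zero_iff]
  have hg2 : (a : ZMod p) * ((n : ZMod p) - 1) + 2 = 0 := by
    have key : (n : ZMod p) * ((a : ZMod p) * ((n : ZMod p) - 1) + 2) = 0 := by
      linear_combination 2 * h2 - (a : ZMod p) * hch'
    rcases mul_eq_zero.mp key with h' | h'
    · exact absurd h' hN
    · exact h'
  refine ⟨?_, hg2⟩
  have hsq : ((-1 : ZMod p) ^ n) * ((-1 : ZMod p) ^ n) = 1 := by
    rw [← pow_add, ← two_mul, pow_mul]; norm_num
  linear_combination hsq - he
end

section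
/- Let p be a prime and n a positive integer with n + 1 divisible by p and such that (x+1)^{n+1} = x^{n+1} + 1 in F_p[x]. Then n + 1 is a power of p. -/
open Polynomial

lemma aux_pow (p : ℕ) (hp : p.Prime) : ∀ m : ℕ, 2 ≤ m →
    (∀ k, 0 < k → k < m → p ∣ m.choose k) → ∃ t : ℕ, m = p ^ t := by
  haveI := Fact.mk hp
  intro m
  induction m using Nat.strong_induction_on with
  | _ m ih =>
    intro hm hdvd
    have hpm : p ∣ m := by
      have := hdvd 1 one_pos (by omega)
      simpa using this
    obtain ⟨m', rfl⟩ := hpm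
    have hp2 := hp.two_le
    have hm' : m' ≠ 0 := by rintro rfl; omega
    rcases eq_or_ne m' 1 with rfl | h1
    · exact ⟨1, by simp⟩
    have hm'2 : 2 ≤ m' := by omega
    have hlt : m' < p * m' := by
      calc m' = 1 * m' := (one_mul m').symm
      _ < p * m' := by
        apply Nat.mul_lt_mul_of_lt_of_le (by omega) le_rfl (by omega)
    have hdvd' : ∀ k, 0 < k → k < m' → p ∣ m'.choose k := by
      intro k hk hk'
      have h1 : (p * m').choose (p * k) ≡
          ((p * m') % p).choose ((p * k) % p) * ((p * m') / p).choose ((p * k) / p) [MOD p] :=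
        Choose.choose_modEq_choose_mod_mul_choose_div_nat
      rw [Nat.mul_mod_right, Nat.mul_mod_right, Nat.mul_div_cancel_left _ (by omega),
        Nat.mul_div_cancel_left _ (by omega), Nat.choose_zero_right, one_mul] at h1
      have h2 : p ∣ (p * m').choose (p * k) := by
        apply hdvd
        · positivity
        · exact Nat.mul_lt_mul_of_le_of_lt le_rfl hk' (by omega)
      rw [← Nat.modEq_zero_iff_dvd] at h2 ⊢
      exact ((h1.symm).trans h2)
    obtain ⟨t, ht⟩ := ih m' hlt hm'2 hdvd'
    exact ⟨t + 1, by rw [ht, pow_succ, mul_comm]⟩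

theorem stmt_7 (p : ℕ) (hp : p.Prime) (n : ℕ) (hn : 0 < n) (hpn : p ∣ n + 1)
    (h : (X + 1 : (ZMod p)[X]) ^ (n + 1) = X ^ (n + 1) + 1) :
    ∃ t : ℕ, n + 1 = p ^ t := by
  apply aux_pow p hp (n + 1) (by omega)
  intro k hk hk'
  have hc : ((X + 1 : (ZMod p)[X]) ^ (n + 1)).coeff k = ((n + 1).choose k : ZMod p) := by
    simpa using coeff_X_add_one_pow (ZMod p) (n + 1) k
  rw [h] at hc
  rw [coeff_add, coeff_X_pow, coeff_one] at hc
  rw [if_neg (by omega), if_neg (by omega), add_zero] at hc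
  have : ((n + 1).choose k : ZMod p) = 0 := hc.symm
  rwa [ZMod.natCast_eq_zero_iff] at this
end
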